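/- Let X be a random vector in ℝⁿ distributed according to μ. Then for every x ∈ ℝⁿ, Λ*_X(x) = sup over unit vectors ξ of Λ*_{⟨X,ξ⟩}(⟨x,ξ⟩), where Λ*_{⟨X,ξ⟩} is the Cramér transform of the one-dimensional marginal ⟨X,ξ⟩. -/

import Mathlib

open scoped Classical
open MeasureTheory Real Set

/-- The cumulant generating function (log-Laplace transform) of a measure on `ℝⁿ`,
with value `⊤` when the exponential moment is infinite. -/
noncomputable def logLaplace {n : ℕ} (μ : Measure (EuclideanSpace ℝ (Fin n)))
    (ξ : EuclideanSpace ℝ (Fin n)) : EReal :=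
  if Integrable (fun y => Real.exp (inner ℝ y ξ : ℝ)) μ then
    ((Real.log (∫ y, Real.exp ((inner ℝ y ξ : ℝ)) ∂μ) : ℝ) : EReal)
  else ⊤

/-- The Cramér transform `Λ*_μ(x) = sup_ξ (⟨x,ξ⟩ − Λ_μ(ξ))`, with values in `EReal`. -/
noncomputable def cramerE {n : ℕ} (μ : Measure (EuclideanSpace ℝ (Fin n)))
    (x : EuclideanSpace ℝ (Fin n)) : EReal :=
  ⨆ ξ : EuclideanSpace ℝ (Fin n), (((inner ℝ x ξ : ℝ) : EReal) - logLaplace μ ξ)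

/-- The cumulant generating function of a measure on `ℝ`. -/
noncomputable def logLaplace1 (ν : Measure ℝ) (t : ℝ) : EReal :=
  if Integrable (fun y => Real.exp (t * y)) ν then
    ((Real.log (∫ y, Real.exp (t * y) ∂ν) : ℝ) : EReal)
  else ⊤

/-- The Cramér transform of a measure on `ℝ`, with values in `EReal`. -/
noncomputable def cramerE1 (ν : Measure ℝ) (s : ℝ) : EReal :=
  ⨆ t : ℝ, (((s * t : ℝ) : EReal) - logLaplace1 ν t)


private lemma marginal_logLaplace {n : ℕ} {Ω : Type*} [MeasurableSpace Ω]
    (ℙ : Measure Ω) (X : Ω → EuclideanSpace ℝ (Fin n)) (hX : Measurable X)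
    (u : EuclideanSpace ℝ (Fin n)) (t : ℝ) :
    logLaplace1 (ℙ.map fun ω => (inner ℝ (X ω) u : ℝ)) t = logLaplace (ℙ.map X) (t • u) := by
  have hg : Measurable fun ω => (inner ℝ (X ω) u : ℝ) :=
    (continuous_inner.comp (Continuous.prodMk continuous_id continuous_const)).measurable.comp hX
  have hf1 : Measurable fun y : ℝ => Real.exp (t * y) :=
    (Real.continuous_exp.comp (continuous_const.mul continuous_id)).measurable
  have hf2 : Measurable fun y : EuclideanSpace ℝ (Fin n) => Real.exp (inner ℝ y (t • u) : ℝ) :=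
    (Real.continuous_exp.comp
      (continuous_inner.comp (Continuous.prodMk continuous_id continuous_const))).measurable
  have key : ∀ y : EuclideanSpace ℝ (Fin n), (inner ℝ y (t • u) : ℝ) = t * (inner ℝ y u : ℝ) :=
    fun y => real_inner_smul_right y u t
  have hi1 : Integrable (fun y : ℝ => Real.exp (t * y)) (ℙ.map fun ω => (inner ℝ (X ω) u : ℝ))
      ↔ Integrable (fun ω => Real.exp (t * (inner ℝ (X ω) u : ℝ))) ℙ :=
    integrable_map_measure hf1.aestronglyMeasurable hg.aemeasurable
  have hi2 : Integrable (fun y => Real.exp (inner ℝ y (t • u) : ℝ)) (ℙ.map X)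
      ↔ Integrable (fun ω => Real.exp (t * (inner ℝ (X ω) u : ℝ))) ℙ := by
    rw [integrable_map_measure hf2.aestronglyMeasurable hX.aemeasurable]
    simp only [Function.comp_def, key]
  have hint : (∫ y, Real.exp (t * y) ∂(ℙ.map fun ω => (inner ℝ (X ω) u : ℝ)))
      = ∫ y, Real.exp (inner ℝ y (t • u) : ℝ) ∂(ℙ.map X) := by
    rw [integral_map hg.aemeasurable hf1.aestronglyMeasurable,
        integral_map hX.aemeasurable hf2.aestronglyMeasurable]
    simp only [key]
  unfold logLaplace1 logLaplace
  rw [hint]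
  by_cases h : Integrable (fun y => Real.exp (inner ℝ y (t • u) : ℝ)) (ℙ.map X)
  · rw [if_pos (hi1.mpr (hi2.mp h)), if_pos h]
  · rw [if_neg fun h' => h (hi2.mpr (hi1.mp h')), if_neg h]

/-- For a random vector `X` in `ℝⁿ` with distribution `μ`, the Cramér transform satisfies
`Λ*_X(x) = sup_{‖ξ‖=1} Λ*_{⟨X,ξ⟩}(⟨x,ξ⟩)`. -/
theorem cramer_eq_sup_marginals {n : ℕ} (hn : 0 < n) {Ω : Type*} [MeasurableSpace Ω]
    (ℙ : Measure Ω) [IsProbabilityMeasure ℙ] (X : Ω → EuclideanSpace ℝ (Fin n))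
    (hX : Measurable X) :
    ∀ x : EuclideanSpace ℝ (Fin n),
      cramerE (ℙ.map X) x =
        ⨆ ξ : {ξ : EuclideanSpace ℝ (Fin n) // ‖ξ‖ = 1},
          cramerE1 (ℙ.map fun ω => (inner ℝ (X ω) ξ.1 : ℝ)) (inner ℝ x ξ.1 : ℝ) := by
  intro x
  set μ := ℙ.map X with hμ
  set F : EuclideanSpace ℝ (Fin n) → EReal :=
    fun ξ => (((inner ℝ x ξ : ℝ) : EReal) - logLaplace μ ξ) with hF
  have hRHS : (⨆ ξ : {ξ : EuclideanSpace ℝ (Fin n) // ‖ξ‖ = 1},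
      cramerE1 (ℙ.map fun ω => (inner ℝ (X ω) ξ.1 : ℝ)) (inner ℝ x ξ.1 : ℝ))
      = ⨆ u : {ξ : EuclideanSpace ℝ (Fin n) // ‖ξ‖ = 1}, ⨆ t : ℝ, F (t • u.1) := by
    refine iSup_congr fun u => ?_
    unfold cramerE1
    refine iSup_congr fun t => ?_
    rw [marginal_logLaplace ℙ X hX u.1 t, hF]
    simp only [real_inner_smul_right, mul_comm]
    rfl
  rw [hRHS]
  have hu₀ : ‖EuclideanSpace.single (⟨0, hn⟩ : Fin n) (1:ℝ)‖ = 1 := by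
    simp [EuclideanSpace.norm_single]
  refine le_antisymm (iSup_le fun ξ => ?_) (iSup_le fun u => iSup_le fun t => le_iSup F (t • u.1))
  by_cases hξ : ξ = 0
  · calc F ξ = F ((0:ℝ) • (EuclideanSpace.single (⟨0, hn⟩ : Fin n) (1:ℝ))) := by
          rw [hξ, zero_smul]
      _ ≤ ⨆ t : ℝ, F (t • (EuclideanSpace.single (⟨0, hn⟩ : Fin n) (1:ℝ))) :=
          le_iSup (fun t : ℝ => F (t • _)) 0
      _ ≤ _ := le_iSup (fun u : {ξ : EuclideanSpace ℝ (Fin n) // ‖ξ‖ = 1} =>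
          ⨆ t : ℝ, F (t • u.1)) ⟨_, hu₀⟩
  · have hun : ‖(‖ξ‖⁻¹ • ξ : EuclideanSpace ℝ (Fin n))‖ = 1 :=
      norm_smul_inv_norm hξ
    have heq : (‖ξ‖ : ℝ) • (‖ξ‖⁻¹ • ξ) = ξ := by
      rw [smul_smul, mul_inv_cancel₀ (norm_ne_zero_iff.mpr hξ), one_smul]
    calc F ξ = F (‖ξ‖ • (‖ξ‖⁻¹ • ξ)) := by rw [heq]
      _ ≤ ⨆ t : ℝ, F (t • (‖ξ‖⁻¹ • ξ)) := le_iSup (fun t : ℝ => F (t • _)) ‖ξ‖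
      _ ≤ _ := le_iSup (fun u : {ξ : EuclideanSpace ℝ (Fin n) // ‖ξ‖ = 1} =>
          ⨆ t : ℝ, F (t • u.1)) ⟨_, hun⟩
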